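/- For any stable configuration r ∈ {0,1}^L of the DSS, let τ = min(L, L+1 − Σ_{x=1}^L r(x)). Then, starting from r and performing τ steps of the driven-dissipative dynamics, the distribution of the resulting stable configuration is exactly the product Bernoulli(p) measure ψ; that is, W^τ δ_r = ψ, where δ_r is the point mass at r. -/

import Mathlib

namespace DSS

/-- A state of the DSS on `L` sites: a stable field `z : Fin L → Bool` together with a
finite multiset `w` of waiting particles (particles past site `L` have left the system). -/
structure State (L : ℕ) where
  z : Fin L → Bool
  w : Multiset (Fin L)

variable {L : ℕ}

/-- The multiset holding the right neighbour of `x`; empty if the particle leaves the system. -/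
def succSite (L : ℕ) (x : Fin L) : Multiset (Fin L) :=
  if h : x.val + 1 < L then {(⟨x.val + 1, h⟩ : Fin L)} else 0

/-- Evolution of a waiting particle at `x` when `z x = 1`: the waiting particle moves to
`x+1` and the stable particle at `x` becomes a waiting particle at `x`. -/
def topple (s : State L) (x : Fin L) : State L :=
  ⟨Function.update s.z x false, s.w + succSite L x⟩

/-- Evolution of a waiting particle at `x` when `z x = 0`, settling branch (probability p). -/
def settle (s : State L) (x : Fin L) : State L :=
  ⟨Function.update s.z x true, s.w.erase x⟩

/-- Evolution of a waiting particle at `x` when `z x = 0`, jumping branch (probability q). -/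
def jump (s : State L) (x : Fin L) : State L :=
  ⟨s.z, s.w.erase x + succSite L x⟩

/-- `stabilizeAux p q R n s c` is the probability that, evolving one waiting particle at a
time (the particle being selected by the rule `R`), the process started from `s` reaches
within `n` elementary steps a stable state whose stable field is `c`. -/
noncomputable def stabilizeAux (p q : ℝ) (R : State L → Option (Fin L)) :
    ℕ → State L → (Fin L → Bool) → ℝ
  | 0, s, c => if s.w = 0 ∧ s.z = c then 1 else 0
  | n + 1, s, c =>
    match R s with
    | none => if s.z = c then 1 else 0
    | some x =>
      if s.z x then stabilizeAux p q R n (topple s x) c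
      else p * stabilizeAux p q R n (settle s x) c
        + q * stabilizeAux p q R n (jump s x) c

/-- The canonical evolution rule: evolve the leftmost waiting particle. -/
def minRule (s : State L) : Option (Fin L) :=
  if h : s.w = 0 then none
  else some (s.w.toFinset.min'
    (Finset.nonempty_iff_ne_empty.mpr (by simpa [Multiset.toFinset_eq_empty] using h)))

/-- A termination measure: the stabilization process started from `s` ends after at most
`fuel s` elementary steps, whatever the rule and the randomness. -/
def potential (s : State L) : ℕ :=
  (s.w.map fun x => L + 1 - x.val).sum + ∑ x : Fin L, (if s.z x then L + 1 - x.val else 0)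

def fuel (s : State L) : ℕ := 2 * potential s + Multiset.card s.w

/-- Add one waiting particle at site `1` (index `0`). -/
def addGrain (r : Fin L → Bool) : State L :=
  ⟨r, if h : 0 < L then {(⟨0, h⟩ : Fin L)} else 0⟩

/-- The driven-dissipative transition kernel `W` of the DSS: add a particle at site 1 and
stabilize. -/
noncomputable def Wker (p q : ℝ) (r r' : Fin L → Bool) : ℝ :=
  stabilizeAux p q minRule (fuel (addGrain r)) (addGrain r) r'

/-- `W` as a matrix on stable configurations. -/
noncomputable def Wmat (p q : ℝ) (L : ℕ) :
    Matrix (Fin L → Bool) (Fin L → Bool) ℝ :=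
  Matrix.of fun r r' => Wker p q r r'

/-- The product Bernoulli(p) measure `ψ(r) = p^(Σ r) q^(L - Σ r)`. -/
noncomputable def psi (p q : ℝ) {L : ℕ} (r : Fin L → Bool) : ℝ :=
  p ^ (Finset.univ.filter fun x => r x = true).card *
    q ^ (L - (Finset.univ.filter fun x => r x = true).card)


variable (p q : ℝ)

/-! ### infrastructure -/

lemma zsum_update (z : Fin L → Bool) (x : Fin L) (b : Bool) :
    (∑ y : Fin L, if (Function.update z x b) y then L + 1 - y.val else 0)
      + (if z x then L + 1 - x.val else 0)
    = (∑ y : Fin L, if z y then L + 1 - y.val else 0)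
      + (if b then L + 1 - x.val else 0) := by
  have h1 : ∀ (w : Fin L → Bool),
      (∑ y : Fin L, if w y then L + 1 - y.val else 0)
        = (if w x then L + 1 - x.val else 0)
          + ∑ y ∈ Finset.univ.erase x, (if w y then L + 1 - y.val else 0) :=
    fun w => (Finset.add_sum_erase _ _ (Finset.mem_univ x)).symm
  rw [h1, h1 z]
  have h2 : ∑ y ∈ Finset.univ.erase x, (if (Function.update z x b) y then L + 1 - y.val else 0)
      = ∑ y ∈ Finset.univ.erase x, (if z y then L + 1 - y.val else 0) :=
    Finset.sum_congr rfl (fun y hy => by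
      rw [Function.update_of_ne (Finset.ne_of_mem_erase hy)])
  rw [h2, Function.update_self]
  omega

lemma succ_sum_le (x : Fin L) :
    ((succSite L x).map fun y => L + 1 - y.val).sum ≤ L - x.val := by
  unfold succSite
  split <;> simp
  all_goals omega

lemma zsum_update_true (z : Fin L → Bool) (x : Fin L) (hz : z x = false) :
    (∑ y : Fin L, if (Function.update z x true) y then L + 1 - y.val else 0)
      = (∑ y : Fin L, if z y then L + 1 - y.val else 0) + (L + 1 - x.val) := by
  have h := zsum_update z x true
  rw [hz] at h
  simpa using h

lemma zsum_update_false (z : Fin L → Bool) (x : Fin L) (hz : z x = true) :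
    (∑ y : Fin L, if (Function.update z x false) y then L + 1 - y.val else 0) + (L + 1 - x.val)
      = (∑ y : Fin L, if z y then L + 1 - y.val else 0) := by
  have h := zsum_update z x false
  rw [hz] at h
  simpa using h

lemma succ_card_le (x : Fin L) : Multiset.card (succSite L x) ≤ 1 := by
  unfold succSite; split <;> simp

lemma erase_sum (w : Multiset (Fin L)) (x : Fin L) (hx : x ∈ w) :
    (w.map fun y => L + 1 - y.val).sum
      = (L + 1 - x.val) + ((w.erase x).map fun y => L + 1 - y.val).sum := by
  conv_lhs => rw [← Multiset.cons_erase hx]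
  rw [Multiset.map_cons, Multiset.sum_cons]

lemma erase_card (w : Multiset (Fin L)) (x : Fin L) (hx : x ∈ w) :
    Multiset.card w = Multiset.card (w.erase x) + 1 := by
  conv_lhs => rw [← Multiset.cons_erase hx]
  rw [Multiset.card_cons]

lemma fuel_topple_lt (s : State L) (x : Fin L) (hz : s.z x = true) :
    fuel (topple s x) < fuel s := by
  have h1 := zsum_update_false s.z x hz
  have h2 := succ_sum_le (L := L) x
  have h3 := succ_card_le (L := L) x
  have h4 : x.val < L := x.isLt
  unfold fuel potential; rw [show (topple s x).z = Function.update s.z x false from rfl]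
  simp only [fuel, potential, topple, Multiset.map_add, Multiset.sum_add, Multiset.card_add]
  omega

lemma fuel_settle_lt (s : State L) (x : Fin L) (hx : x ∈ s.w) (hz : s.z x = false) :
    fuel (settle s x) < fuel s := by
  have h1 := zsum_update_true s.z x hz
  have h2 := erase_sum s.w x hx
  have h3 := erase_card s.w x hx
  have h4 : x.val < L := x.isLt
  unfold fuel potential; rw [show (settle s x).z = Function.update s.z x true from rfl]
  simp only [fuel, potential, settle]
  omega

lemma fuel_jump_lt (s : State L) (x : Fin L) (hx : x ∈ s.w) :
    fuel (jump s x) < fuel s := by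
  have h2 := erase_sum s.w x hx
  have h3 := erase_card s.w x hx
  have h4 := succ_sum_le (L := L) x
  have h5 := succ_card_le (L := L) x
  have h6 : x.val < L := x.isLt
  unfold fuel potential; rw [show (jump s x).z = s.z from rfl]
  simp only [fuel, potential, jump, Multiset.map_add, Multiset.sum_add, Multiset.card_add]
  omega

lemma minRule_none (s : State L) (h : s.w = 0) : minRule s = none := dif_pos h

lemma minRule_none_iff (s : State L) : minRule s = none ↔ s.w = 0 := by
  constructor
  · intro h
    by_contra hw
    unfold minRule at h
    rw [dif_neg hw] at h
    exact absurd h (by simp)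
  · exact minRule_none s

lemma minRule_mem {s : State L} {x : Fin L} (h : minRule s = some x) : x ∈ s.w := by
  unfold minRule at h
  split at h
  · exact absurd h (by simp)
  · rw [Option.some_inj] at h
    rw [← h]
    exact Multiset.mem_toFinset.mp (Finset.min'_mem _ _)

lemma minRule_eq_some {s : State L} {x : Fin L} (hx : x ∈ s.w)
    (hall : ∀ y ∈ s.w, x ≤ y) : minRule s = some x := by
  have hw : s.w ≠ 0 := by intro h; rw [h] at hx; simp at hx
  unfold minRule
  rw [dif_neg hw, Option.some_inj]
  exact le_antisymm
    (Finset.min'_le _ _ (Multiset.mem_toFinset.mpr hx))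
    (Finset.le_min' _ _ _ (fun y hy => hall y (Multiset.mem_toFinset.mp hy)))

variable (p q : ℝ)

noncomputable def Stab (s : State L) (c : Fin L → Bool) : ℝ :=
  stabilizeAux p q minRule (fuel s) s c

lemma stab_w0 (n : ℕ) (s : State L) (c : Fin L → Bool) (hw : s.w = 0) :
    stabilizeAux p q minRule n s c = if s.z = c then 1 else 0 := by
  cases n with
  | zero => simp [stabilizeAux, hw]
  | succ n => simp only [stabilizeAux, minRule_none s hw]

lemma stab_some (n : ℕ) (s : State L) (c : Fin L → Bool) {x : Fin L}
    (hx : minRule s = some x) :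
    stabilizeAux p q minRule (n + 1) s c =
      if s.z x then stabilizeAux p q minRule n (topple s x) c
      else p * stabilizeAux p q minRule n (settle s x) c
        + q * stabilizeAux p q minRule n (jump s x) c := by
  simp only [stabilizeAux, hx]

lemma stab_fuel_step : ∀ (n : ℕ) (s : State L) (c : Fin L → Bool), fuel s ≤ n →
    stabilizeAux p q minRule (n + 1) s c = stabilizeAux p q minRule n s c := by
  intro n
  induction n using Nat.strong_induction_on with
  | _ n ih =>
  intro s c hn
  cases hR : minRule s with
  | none =>
    have hw : s.w = 0 := (minRule_none_iff s).mp hR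
    rw [stab_w0 _ _ _ _ _ hw, stab_w0 _ _ _ _ _ hw]
  | some x =>
    have hx := minRule_mem hR
    have h1 : 1 ≤ Multiset.card s.w := Multiset.card_pos.mpr (by
      intro h; rw [h] at hx; simp at hx)
    have hfuel1 : 1 ≤ fuel s := by unfold fuel; omega
    obtain ⟨n', rfl⟩ : ∃ n', n = n' + 1 := ⟨n - 1, by omega⟩
    rw [stab_some p q (n' + 1) s c hR, stab_some p q n' s c hR]
    by_cases hz : s.z x = true
    · rw [if_pos hz, if_pos hz]
      exact ih n' (by omega) _ _ (by have := fuel_topple_lt s x hz; omega)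
    · have hzf : s.z x = false := by simpa using hz
      rw [if_neg hz, if_neg hz,
        ih n' (by omega) _ _ (by have := fuel_settle_lt s x hx hzf; omega),
        ih n' (by omega) _ _ (by have := fuel_jump_lt s x hx; omega)]

lemma stab_eq_Stab : ∀ (n : ℕ) (s : State L) (c : Fin L → Bool), fuel s ≤ n →
    stabilizeAux p q minRule n s c = Stab p q s c := by
  intro n
  induction n using Nat.strong_induction_on with
  | _ n ih =>
  intro s c hn
  rcases eq_or_lt_of_le hn with h | h
  · rw [Stab, h]
  · obtain ⟨n', rfl⟩ : ∃ n', n = n' + 1 := ⟨n - 1, by omega⟩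
    rw [stab_fuel_step p q n' s c (by omega), ih n' (by omega) s c (by omega)]


/-! ### pile states -/

lemma ite_tt : (if (true : Bool) = true then (1:ℕ) else 0) = 1 := rfl
lemma ite_ff : (if (false : Bool) = true then (1:ℕ) else 0) = 0 := rfl

lemma pile_cons (m m' : ℕ) (x : Fin L) :
    (m + 1) • ({x} : Multiset (Fin L)) + m' • succSite L x
      = x ::ₘ (m • ({x} : Multiset (Fin L)) + m' • succSite L x) := by
  rw [succ_nsmul, add_right_comm, add_comm, Multiset.singleton_add]

lemma mem_pile_le {y x : Fin L} {m m' : ℕ}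
    (hy : y ∈ m • ({x} : Multiset (Fin L)) + m' • succSite L x) : x ≤ y := by
  rcases Multiset.mem_add.mp hy with h | h
  · rw [Multiset.mem_singleton.mp (Multiset.mem_of_mem_nsmul h)]
  · have h2 := Multiset.mem_of_mem_nsmul h
    unfold succSite at h2
    split at h2
    · rw [Multiset.mem_singleton.mp h2]
      exact Fin.le_def.mpr (by simp <;> omega)
    · simp at h2

lemma x_mem_pile (x : Fin L) (m m' : ℕ) :
    x ∈ (m + 1) • ({x} : Multiset (Fin L)) + m' • succSite L x :=
  Multiset.mem_add.mpr (Or.inl (Multiset.mem_nsmul.mpr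
    ⟨by omega, Multiset.mem_singleton_self x⟩))

lemma stab_pile_arg {z' : Fin L → Bool} {x : Fin L} {c : Fin L → Bool} (a b : ℕ)
    (h : a = b) :
    Stab p q ⟨z', a • succSite L x⟩ c = Stab p q ⟨z', b • succSite L x⟩ c := by rw [h]

/-- `INNER`: resolving the whole pile of `m₀+1` waiting particles at site `x`
(together with a pile of `m'` particles already forwarded to the next site). -/
lemma inner (hpq : p + q = 1) :
    ∀ (N m₀ m' : ℕ) (x : Fin L) (z c : Fin L → Bool),
      2 * m₀ + (if z x then 1 else 0) ≤ N →
      Stab p q ⟨z, (m₀ + 1) • ({x} : Multiset (Fin L)) + m' • succSite L x⟩ c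
        = p * Stab p q ⟨Function.update z x true,
              (m' + m₀ + (if z x then 1 else 0)) • succSite L x⟩ c
          + q * Stab p q ⟨Function.update z x false,
              (m' + m₀ + 1 + (if z x then 1 else 0)) • succSite L x⟩ c := by
  intro N
  induction N using Nat.strong_induction_on with
  | _ N ih =>
  intro m₀ m' x z c hN
  set s : State L := ⟨z, (m₀ + 1) • ({x} : Multiset (Fin L)) + m' • succSite L x⟩ with hs
  have hxw : x ∈ s.w := x_mem_pile x m₀ m'
  have hmin : minRule s = some x := minRule_eq_some hxw (fun y hy => mem_pile_le hy)
  have hcard : 1 ≤ Multiset.card s.w := Multiset.card_pos.mpr (by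
    intro h; rw [h] at hxw; simp at hxw)
  have hfuel : 1 ≤ fuel s := by unfold fuel; omega
  obtain ⟨n, hn⟩ : ∃ n, fuel s = n + 1 := ⟨fuel s - 1, by omega⟩
  have expand : Stab p q s c
      = if s.z x then stabilizeAux p q minRule n (topple s x) c
        else p * stabilizeAux p q minRule n (settle s x) c
          + q * stabilizeAux p q minRule n (jump s x) c := by
    rw [Stab, hn, stab_some p q n s c hmin]
  cases hz : z x with
  | true =>
    have hsz : s.z x = true := hz
    have hN' : 2 * m₀ + 1 ≤ N := by simpa [hz] using hN
    have htop : topple s x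
        = ⟨Function.update z x false,
           (m₀ + 1) • ({x} : Multiset (Fin L)) + (m' + 1) • succSite L x⟩ := by
      show (⟨Function.update z x false,
        ((m₀ + 1) • ({x} : Multiset (Fin L)) + m' • succSite L x) + succSite L x⟩ : State L) = _
      rw [add_assoc, ← succ_nsmul]
    have hlt : fuel (topple s x) < fuel s := fuel_topple_lt s x hsz
    have hS : stabilizeAux p q minRule n (topple s x) c = Stab p q (topple s x) c :=
      stab_eq_Stab p q n (topple s x) c (by omega)
    rw [expand, if_pos hsz, hS, htop]
    rw [ih (2 * m₀) (by omega) m₀ (m' + 1) x (Function.update z x false) c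
      (by simp only [Function.update_self, ite_ff, ite_tt, if_true, Bool.false_eq_true, if_false] <;> omega)]
    simp only [Function.update_idem, Function.update_self, ite_ff, ite_tt, if_true]
    rw [stab_pile_arg p q (m' + 1 + m₀ + 0) (m' + m₀ + 1) (by omega),
        stab_pile_arg p q (m' + 1 + m₀ + 1 + 0) (m' + m₀ + 1 + 1) (by omega)]
  | false =>
    have hsz : s.z x = false := hz
    have hN' : 2 * m₀ ≤ N := by simpa [hz] using hN
    have hset : settle s x
        = ⟨Function.update z x true,
           m₀ • ({x} : Multiset (Fin L)) + m' • succSite L x⟩ := by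
      show (⟨Function.update z x true,
        ((m₀ + 1) • ({x} : Multiset (Fin L)) + m' • succSite L x).erase x⟩ : State L) = _
      rw [pile_cons, Multiset.erase_cons_head]
    have hjmp : jump s x
        = ⟨z, m₀ • ({x} : Multiset (Fin L)) + (m' + 1) • succSite L x⟩ := by
      show (⟨z,
        ((m₀ + 1) • ({x} : Multiset (Fin L)) + m' • succSite L x).erase x
          + succSite L x⟩ : State L) = _
      rw [pile_cons, Multiset.erase_cons_head, add_assoc, ← succ_nsmul]
    have hlts : fuel (settle s x) < fuel s := fuel_settle_lt s x hxw hsz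
    have hltj : fuel (jump s x) < fuel s := fuel_jump_lt s x hxw
    have hSs : stabilizeAux p q minRule n (settle s x) c = Stab p q (settle s x) c :=
      stab_eq_Stab p q n (settle s x) c (by omega)
    have hSj : stabilizeAux p q minRule n (jump s x) c = Stab p q (jump s x) c :=
      stab_eq_Stab p q n (jump s x) c (by omega)
    rw [expand, if_neg (by simp [hsz]), hSs, hSj, hset, hjmp]
    cases m₀ with
    | zero =>
      simp only [zero_nsmul, zero_add, ite_ff, if_true]
      have hupf : Function.update z x false = z := by
        rw [← hz]; exact Function.update_eq_self x z
      rw [hupf]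
      rw [stab_pile_arg p q (m' + 0 + 0) m' (by omega),
          stab_pile_arg p q (m' + 0 + 1 + 0) (m' + 1) (by omega)]
    | succ m₁ =>
      rw [ih (2 * m₁ + 1) (by omega) m₁ m' x (Function.update z x true) c
        (by simp only [Function.update_self, ite_ff, ite_tt, if_true, Bool.false_eq_true, if_false] <;> omega)]
      rw [ih (2 * m₁ + 1) (by omega) m₁ (m' + 1) x z c
        (by simp only [hz, ite_ff, ite_tt, if_true, Bool.false_eq_true, if_false] <;> omega)]
      simp only [Function.update_idem, Function.update_self, hz, ite_tt, ite_ff, if_true]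
      rw [stab_pile_arg p q (m' + 1 + m₁ + 0) (m' + m₁ + 1) (by omega),
          stab_pile_arg p q (m' + 1 + m₁ + 1 + 0) (m' + m₁ + 1 + 1) (by omega),
          stab_pile_arg p q (m' + m₁ + 1 + 1) (m' + m₁ + 2) (by omega),
          stab_pile_arg p q (m' + (m₁ + 1) + 0) (m' + m₁ + 1) (by omega),
          stab_pile_arg p q (m' + (m₁ + 1) + 1 + 0) (m' + m₁ + 2) (by omega)]
      rw [← add_mul, hpq, one_mul]


/-! ### the explicit site-by-site law `fProb` -/

noncomputable def fProb (p q : ℝ) {L : ℕ} (j : ℕ) (z : Fin L → Bool) (t : ℕ)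
    (c : Fin L → Bool) : ℝ :=
  if h : j < L then
    match t with
    | 0 => if z = c then 1 else 0
    | t' + 1 =>
        p * fProb p q (j + 1) (Function.update z ⟨j, h⟩ true)
              (t' + (if z ⟨j, h⟩ then 1 else 0)) c
          + q * fProb p q (j + 1) (Function.update z ⟨j, h⟩ false)
              (t' + 1 + (if z ⟨j, h⟩ then 1 else 0)) c
  else if z = c then 1 else 0
termination_by L - j

lemma fProb_stop {j : ℕ} (h : ¬ j < L) (z : Fin L → Bool) (t : ℕ) (c : Fin L → Bool) :
    fProb p q j z t c = if z = c then 1 else 0 := by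
  rw [fProb, dif_neg h]

lemma fProb_zero (j : ℕ) (z c : Fin L → Bool) :
    fProb p q j z 0 c = if z = c then 1 else 0 := by
  rw [fProb]
  split <;> rfl

lemma fProb_succ {j : ℕ} (h : j < L) (z : Fin L → Bool) (t : ℕ) (c : Fin L → Bool) :
    fProb p q j z (t + 1) c
      = p * fProb p q (j + 1) (Function.update z ⟨j, h⟩ true)
            (t + (if z ⟨j, h⟩ then 1 else 0)) c
        + q * fProb p q (j + 1) (Function.update z ⟨j, h⟩ false)
            (t + 1 + (if z ⟨j, h⟩ then 1 else 0)) c := by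
  rw [fProb, dif_pos h]

/-- the pile multiset at (possibly out-of-range) position `j` -/
def pileM (L : ℕ) (j : ℕ) : Multiset (Fin L) :=
  if h : j < L then {(⟨j, h⟩ : Fin L)} else 0

lemma succSite_eq_pileM (x : Fin L) : succSite L x = pileM L (x.val + 1) := rfl

lemma stab_pile0 (s0 : State L) (hw : s0.w = 0) (c : Fin L → Bool) :
    Stab p q s0 c = if s0.z = c then 1 else 0 :=
  stab_w0 p q _ s0 c hw

/-- `FREC` : the stabilisation law of a pile of `m` particles at site `j` is `fProb`. -/
lemma frec (hpq : p + q = 1) :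
    ∀ (d j : ℕ), L - j ≤ d → ∀ (z : Fin L → Bool) (m : ℕ) (c : Fin L → Bool),
      Stab p q ⟨z, m • pileM L j⟩ c = fProb p q j z m c := by
  intro d
  induction d with
  | zero =>
    intro j hj z m c
    have hjL : ¬ j < L := by omega
    rw [fProb_stop p q hjL]
    have : m • pileM L j = 0 := by
      rw [pileM, dif_neg hjL]; simp
    rw [this]
    exact stab_pile0 p q _ rfl c
  | succ d ihd =>
    intro j hj z m c
    by_cases hjL : j < L
    · cases m with
      | zero =>
        rw [fProb_zero, zero_nsmul]
        exact stab_pile0 p q _ rfl c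
      | succ m₀ =>
        have hpile : (m₀ + 1) • pileM L j
            = (m₀ + 1) • ({(⟨j, hjL⟩ : Fin L)} : Multiset (Fin L))
              + 0 • succSite L ⟨j, hjL⟩ := by
          rw [pileM, dif_pos hjL]; simp
        rw [hpile, inner p q hpq (2 * m₀ + 1) m₀ 0 ⟨j, hjL⟩ z c (by split <;> omega)]
        have hsucc : succSite L ⟨j, hjL⟩ = pileM L (j + 1) := succSite_eq_pileM _
        rw [hsucc]
        rw [ihd (j + 1) (by omega) _ _ c, ihd (j + 1) (by omega) _ _ c]
        rw [fProb_succ p q hjL]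
        have e1 : 0 + m₀ + (if z ⟨j, hjL⟩ then 1 else 0)
            = m₀ + (if z ⟨j, hjL⟩ then 1 else 0) := by omega
        have e2 : 0 + m₀ + 1 + (if z ⟨j, hjL⟩ then 1 else 0)
            = m₀ + 1 + (if z ⟨j, hjL⟩ then 1 else 0) := by omega
        rw [e1, e2]
    · rw [fProb_stop p q hjL]
      have : m • pileM L j = 0 := by rw [pileM, dif_neg hjL]; simp
      rw [this]
      exact stab_pile0 p q _ rfl c


/-! ### support and swap lemmas for `fProb` -/

lemma upd_iff {α : Type*} {β : Type*} [DecidableEq α] (f g : α → β) (x : α) (a : β) :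
    Function.update f x a = Function.update g x a ↔ ∀ y, y ≠ x → f y = g y := by
  constructor
  · intro h y hy
    have := congrFun h y
    rwa [Function.update_of_ne hy, Function.update_of_ne hy] at this
  · intro h
    funext y
    by_cases hy : y = x
    · subst hy; rw [Function.update_self, Function.update_self]
    · rw [Function.update_of_ne hy, Function.update_of_ne hy]
      exact h y hy

lemma supp : ∀ (d j : ℕ), L - j ≤ d → ∀ (z : Fin L → Bool) (t : ℕ) (c : Fin L → Bool)
    (x : Fin L), x.val < j → c x ≠ z x → fProb p q j z t c = 0 := by
  intro d
  induction d with
  | zero =>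
    intro j hj z t c x hx hne
    rw [fProb_stop p q (by omega), if_neg]
    intro h; exact hne (by rw [h])
  | succ d ihd =>
    intro j hj z t c x hx hne
    by_cases hjL : j < L
    · cases t with
      | zero =>
        rw [fProb_zero, if_neg]
        intro h; exact hne (by rw [h])
      | succ t' =>
        rw [fProb_succ p q hjL]
        have hxj : x ≠ (⟨j, hjL⟩ : Fin L) := by
          intro h; rw [h] at hx; simp at hx
        rw [ihd (j + 1) (by omega) _ _ c x (by omega)
            (by rwa [Function.update_of_ne hxj]),
          ihd (j + 1) (by omega) _ _ c x (by omega)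
            (by rwa [Function.update_of_ne hxj])]
        ring
    · rw [fProb_stop p q hjL, if_neg]
      intro h; exact hne (by rw [h])

lemma swap : ∀ (d j : ℕ), L - j ≤ d → ∀ (z c : Fin L → Bool) (t : ℕ) (x : Fin L)
    (a a' : Bool), x.val < j →
    fProb p q j (Function.update z x a) t (Function.update c x a)
      = fProb p q j (Function.update z x a') t (Function.update c x a') := by
  intro d
  induction d with
  | zero =>
    intro j hj z c t x a a' hx
    rw [fProb_stop p q (by omega), fProb_stop p q (by omega)]
    exact if_congr ((upd_iff z c x a).trans (upd_iff z c x a').symm) rfl rfl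
  | succ d ihd =>
    intro j hj z c t x a a' hx
    by_cases hjL : j < L
    · cases t with
      | zero =>
        rw [fProb_zero, fProb_zero]
        exact if_congr ((upd_iff z c x a).trans (upd_iff z c x a').symm) rfl rfl
      | succ t' =>
        have hxj : x ≠ (⟨j, hjL⟩ : Fin L) := by
          intro h; rw [h] at hx; simp at hx
        rw [fProb_succ p q hjL, fProb_succ p q hjL]
        rw [Function.update_of_ne hxj.symm, Function.update_comm hxj,
          Function.update_comm hxj,
          Function.update_of_ne hxj.symm,
          Function.update_comm (a := x) (b := (⟨j, hjL⟩ : Fin L)) hxj,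
          Function.update_comm (a := x) (b := (⟨j, hjL⟩ : Fin L)) hxj]
        rw [ihd (j + 1) (by omega) _ c _ x a a' (by omega),
          ihd (j + 1) (by omega) _ c _ x a a' (by omega)]
    · rw [fProb_stop p q hjL, fProb_stop p q hjL]
      exact if_congr ((upd_iff z c x a).trans (upd_iff z c x a').symm) rfl rfl


/-! ### the semigroup (abelian) property of pile stabilisation -/

lemma sum_delta_left (f : (Fin L → Bool) → ℝ) (z : Fin L → Bool) :
    ∑ b : Fin L → Bool, (if z = b then (1:ℝ) else 0) * f b = f z := by
  simp only [ite_mul, one_mul, zero_mul, Finset.sum_ite_eq, Finset.mem_univ, if_true]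

lemma sum_delta_right (f : (Fin L → Bool) → ℝ) (c : Fin L → Bool) :
    ∑ b : Fin L → Bool, f b * (if b = c then (1:ℝ) else 0) = f c := by
  simp only [mul_ite, mul_one, mul_zero, Finset.sum_ite_eq', Finset.mem_univ, if_true]

lemma pdgen (hpq : p + q = 1) :
    ∀ (d j : ℕ), L - j ≤ d → ∀ (z : Fin L → Bool) (m k : ℕ) (c : Fin L → Bool),
      fProb p q j z (m + k) c
        = ∑ b : Fin L → Bool, fProb p q j z m b * fProb p q j b k c := by
  intro d
  induction d with
  | zero =>
    intro j hj z m k c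
    have hjL : ¬ j < L := by omega
    simp only [fProb_stop p q hjL]
    rw [sum_delta_left (fun b => if b = c then (1:ℝ) else 0) z]
  | succ d ihd =>
    intro j hj z m k c
    by_cases hjL : j < L
    · cases m with
      | zero =>
        rw [Nat.zero_add]
        simp only [fProb_zero p q j z]
        rw [sum_delta_left (fun b => fProb p q j b k c) z]
      | succ m₀ =>
        cases k with
        | zero =>
          rw [Nat.add_zero]
          simp only [fProb_zero p q j _ c]
          rw [sum_delta_right (fun b => fProb p q j z (m₀ + 1) b) c]
        | succ k₀ =>
          have hdj : L - (j + 1) ≤ d := by omega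
          have hXlt : ((⟨j, hjL⟩ : Fin L) : ℕ) < j + 1 := Nat.lt_succ_self j
          have hmk : m₀ + 1 + (k₀ + 1) = (m₀ + 1 + k₀) + 1 := by omega
          rw [hmk]
          simp only [fProb_succ p q hjL]
          generalize hzi : (if z (⟨j, hjL⟩ : Fin L) = true then (1:ℕ) else 0) = zi
          have hCz : ∀ (u : Fin L → Bool) (t' : ℕ), c ⟨j, hjL⟩ ≠ u ⟨j, hjL⟩ →
              fProb p q (j + 1) u t' c = 0 :=
            fun u t' hne => supp p q d (j + 1) hdj u t' c ⟨j, hjL⟩ hXlt hne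
          have hA1z : ∀ b : Fin L → Bool, b ⟨j, hjL⟩ ≠ true →
              fProb p q (j + 1) (Function.update z ⟨j, hjL⟩ true) (m₀ + zi) b = 0 :=
            fun b hb => supp p q d (j + 1) hdj _ _ b ⟨j, hjL⟩ hXlt
              (by rw [Function.update_self]; exact hb)
          have hA2z : ∀ b : Fin L → Bool, b ⟨j, hjL⟩ ≠ false →
              fProb p q (j + 1) (Function.update z ⟨j, hjL⟩ false) (m₀ + 1 + zi) b = 0 :=
            fun b hb => supp p q d (j + 1) hdj _ _ b ⟨j, hjL⟩ hXlt
              (by rw [Function.update_self]; exact hb)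
          have hq1 : q = 1 - p := by linarith
          by_cases hcX : c ⟨j, hjL⟩ = true
          · -- left side : second term dies
            rw [hCz (Function.update z ⟨j, hjL⟩ false) (m₀ + 1 + k₀ + 1 + zi)
              (by rw [Function.update_self, hcX]; decide)]
            have hcup : Function.update c ⟨j, hjL⟩ true = c := by
              rw [← hcX]; exact Function.update_eq_self _ _
            have hpoint : ∀ b ∈ (Finset.univ : Finset (Fin L → Bool)),
                (p * fProb p q (j+1) (Function.update z ⟨j, hjL⟩ true) (m₀ + zi) b
                  + q * fProb p q (j+1) (Function.update z ⟨j, hjL⟩ false) (m₀ + 1 + zi) b)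
                * (p * fProb p q (j+1) (Function.update b ⟨j, hjL⟩ true)
                      (k₀ + (if b ⟨j, hjL⟩ then 1 else 0)) c
                  + q * fProb p q (j+1) (Function.update b ⟨j, hjL⟩ false)
                      (k₀ + 1 + (if b ⟨j, hjL⟩ then 1 else 0)) c)
                = p * p * (fProb p q (j+1) (Function.update z ⟨j, hjL⟩ true) (m₀ + zi) b
                      * fProb p q (j+1) b (k₀ + 1) c)
                  + q * p * (fProb p q (j+1) (Function.update z ⟨j, hjL⟩ false) (m₀ + 1 + zi) b
                      * fProb p q (j+1) b k₀ (Function.update c ⟨j, hjL⟩ false)) := by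
              intro b _
              by_cases hb : b ⟨j, hjL⟩ = true
              · rw [hA2z b (by rw [hb]; decide), hb]
                simp only [ite_tt, if_true]
                have hBt : Function.update b ⟨j, hjL⟩ true = b := by
                  rw [← hb]; exact Function.update_eq_self _ _
                rw [hBt,
                  hCz (Function.update b ⟨j, hjL⟩ false) (k₀ + 1 + 1)
                    (by rw [Function.update_self, hcX]; decide)]
                ring
              · have hbf : b ⟨j, hjL⟩ = false := by simpa using hb
                rw [hA1z b hb, hbf]
                simp only [ite_ff, Bool.false_eq_true, if_false, Nat.add_zero]
                have hBf : Function.update b ⟨j, hjL⟩ false = b := by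
                  rw [← hbf]; exact Function.update_eq_self _ _
                rw [hCz (Function.update b ⟨j, hjL⟩ false) (k₀ + 1)
                  (by rw [Function.update_self, hcX]; decide)]
                have hswapb := swap p q d (j + 1) hdj b c k₀ ⟨j, hjL⟩ true false hXlt
                rw [hcup, hBf] at hswapb
                rw [hswapb]
                ring
            rw [Finset.sum_congr rfl hpoint, Finset.sum_add_distrib,
              ← Finset.mul_sum, ← Finset.mul_sum,
              ← ihd (j + 1) hdj (Function.update z ⟨j, hjL⟩ true) (m₀ + zi) (k₀ + 1) c,
              ← ihd (j + 1) hdj (Function.update z ⟨j, hjL⟩ false) (m₀ + 1 + zi) k₀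
                (Function.update c ⟨j, hjL⟩ false)]
            have hswap2 := swap p q d (j + 1) hdj z c (m₀ + 1 + zi + k₀) ⟨j, hjL⟩ false true hXlt
            rw [hcup] at hswap2
            rw [hswap2]
            have e1 : m₀ + zi + (k₀ + 1) = m₀ + 1 + k₀ + zi := by omega
            have e2 : m₀ + 1 + zi + k₀ = m₀ + 1 + k₀ + zi := by omega
            rw [e1, e2, hq1]
            ring
          · have hcf : c ⟨j, hjL⟩ = false := by simpa using hcX
            -- left side : first term dies
            rw [hCz (Function.update z ⟨j, hjL⟩ true) (m₀ + 1 + k₀ + zi)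
              (by rw [Function.update_self, hcf]; exact Bool.false_ne_true)]
            have hcup : Function.update c ⟨j, hjL⟩ false = c := by
              rw [← hcf]; exact Function.update_eq_self _ _
            have hpoint : ∀ b ∈ (Finset.univ : Finset (Fin L → Bool)),
                (p * fProb p q (j+1) (Function.update z ⟨j, hjL⟩ true) (m₀ + zi) b
                  + q * fProb p q (j+1) (Function.update z ⟨j, hjL⟩ false) (m₀ + 1 + zi) b)
                * (p * fProb p q (j+1) (Function.update b ⟨j, hjL⟩ true)
                      (k₀ + (if b ⟨j, hjL⟩ then 1 else 0)) c
                  + q * fProb p q (j+1) (Function.update b ⟨j, hjL⟩ false)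
                      (k₀ + 1 + (if b ⟨j, hjL⟩ then 1 else 0)) c)
                = p * q * (fProb p q (j+1) (Function.update z ⟨j, hjL⟩ true) (m₀ + zi) b
                      * fProb p q (j+1) b (k₀ + 1 + 1) (Function.update c ⟨j, hjL⟩ true))
                  + q * q * (fProb p q (j+1) (Function.update z ⟨j, hjL⟩ false) (m₀ + 1 + zi) b
                      * fProb p q (j+1) b (k₀ + 1) c) := by
              intro b _
              by_cases hb : b ⟨j, hjL⟩ = true
              · rw [hA2z b (by rw [hb]; decide), hb]
                simp only [ite_tt, if_true]
                have hBt : Function.update b ⟨j, hjL⟩ true = b := by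
                  rw [← hb]; exact Function.update_eq_self _ _
                rw [hBt, hCz b (k₀ + 1) (by rw [hcf, hb]; exact Bool.false_ne_true)]
                have hswapb := swap p q d (j + 1) hdj b c (k₀ + 1 + 1) ⟨j, hjL⟩ false true hXlt
                rw [hcup, hBt] at hswapb
                rw [hswapb]
                ring
              · have hbf : b ⟨j, hjL⟩ = false := by simpa using hb
                rw [hA1z b hb, hbf]
                simp only [ite_ff, Bool.false_eq_true, if_false, Nat.add_zero]
                have hBf : Function.update b ⟨j, hjL⟩ false = b := by
                  rw [← hbf]; exact Function.update_eq_self _ _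
                rw [hBf, hCz (Function.update b ⟨j, hjL⟩ true) k₀
                  (by rw [Function.update_self, hcf]; exact Bool.false_ne_true)]
                ring
            rw [Finset.sum_congr rfl hpoint, Finset.sum_add_distrib,
              ← Finset.mul_sum, ← Finset.mul_sum,
              ← ihd (j + 1) hdj (Function.update z ⟨j, hjL⟩ true) (m₀ + zi) (k₀ + 1 + 1)
                (Function.update c ⟨j, hjL⟩ true),
              ← ihd (j + 1) hdj (Function.update z ⟨j, hjL⟩ false) (m₀ + 1 + zi) (k₀ + 1) c]
            have hswap2 := swap p q d (j + 1) hdj z c (m₀ + zi + (k₀ + 1 + 1)) ⟨j, hjL⟩ true false hXlt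
            rw [hcup] at hswap2
            rw [hswap2]
            have e1 : m₀ + zi + (k₀ + 1 + 1) = m₀ + 1 + k₀ + 1 + zi := by omega
            have e2 : m₀ + 1 + zi + (k₀ + 1) = m₀ + 1 + k₀ + 1 + zi := by omega
            rw [e1, e2, hq1]
            ring
    · simp only [fProb_stop p q hjL]
      rw [sum_delta_left (fun b => if b = c then (1:ℝ) else 0) z]


/-! ### counting lemmas -/

def cnt {L : ℕ} (j x : ℕ) (z : Fin L → Bool) : ℕ :=
  ∑ y : Fin L, if j ≤ y.val ∧ y.val < x ∧ z y = true then 1 else 0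

lemma cnt_self (j : ℕ) (z : Fin L → Bool) : cnt j j z = 0 :=
  Finset.sum_eq_zero fun y _ => by rw [if_neg (by rintro ⟨h1, h2, -⟩; omega)]

lemma cnt_split {j : ℕ} (hjL : j < L) (x : ℕ) (hx : j < x) (z : Fin L → Bool) :
    cnt j x z = (if z ⟨j, hjL⟩ then 1 else 0) + cnt (j + 1) x z := by
  unfold cnt
  rw [← Finset.add_sum_erase _ (fun y : Fin L => if j ≤ y.val ∧ y.val < x ∧ z y = true then 1 else 0)
      (Finset.mem_univ (⟨j, hjL⟩ : Fin L)),
    ← Finset.add_sum_erase _ (fun y : Fin L => if j + 1 ≤ y.val ∧ y.val < x ∧ z y = true then 1 else 0)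
      (Finset.mem_univ (⟨j, hjL⟩ : Fin L))]
  have h1 : (if j ≤ (⟨j, hjL⟩ : Fin L).val ∧ (⟨j, hjL⟩ : Fin L).val < x ∧ z ⟨j, hjL⟩ = true
      then 1 else 0) = (if z ⟨j, hjL⟩ then 1 else 0) := by
    by_cases h : z ⟨j, hjL⟩ = true
    · rw [if_pos ⟨le_refl j, hx, h⟩, if_pos h]
    · rw [if_neg (by rintro ⟨-, -, hh⟩; exact h hh), if_neg h]
  have h2 : (if j + 1 ≤ (⟨j, hjL⟩ : Fin L).val ∧ (⟨j, hjL⟩ : Fin L).val < x ∧ z ⟨j, hjL⟩ = true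
      then 1 else 0) = 0 := if_neg (by rintro ⟨hh, -, -⟩; exact Nat.not_succ_le_self j hh)
  rw [h1, h2, zero_add]
  congr 1
  refine Finset.sum_congr rfl fun y hy => ?_
  have hyj : y.val ≠ j := by
    intro h
    exact (Finset.ne_of_mem_erase hy) (Fin.ext h)
  exact if_congr ⟨fun ⟨a1, a2, a3⟩ => ⟨by omega, a2, a3⟩, fun ⟨a1, a2, a3⟩ => ⟨by omega, a2, a3⟩⟩
    rfl rfl

lemma cnt_update {j : ℕ} {X : Fin L} (hXj : X.val < j) (x : ℕ) (a : Bool) (z : Fin L → Bool) :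
    cnt j x (Function.update z X a) = cnt j x z :=
  Finset.sum_congr rfl fun y _ => by
    by_cases hy : y = X
    · subst hy
      rw [if_neg (by rintro ⟨h1, -, -⟩; omega), if_neg (by rintro ⟨h1, -, -⟩; omega)]
    · rw [Function.update_of_ne hy]

lemma count_lt (x : ℕ) (hx : x < L) :
    (∑ y : Fin L, if y.val < x then (1:ℕ) else 0) = x := by
  rw [← Finset.card_filter]
  have h : Finset.univ.filter (fun y : Fin L => y.val < x) = Finset.Iio (⟨x, hx⟩ : Fin L) := by
    ext y
    simp [Finset.mem_Iio, Fin.lt_def]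
  rw [h, Fin.card_Iio]

lemma count_ge (x : ℕ) (hx : x < L) :
    (∑ y : Fin L, if x ≤ y.val then (1:ℕ) else 0) = L - x := by
  have h := count_lt (L := L) x hx
  have hsum : (∑ y : Fin L, ((if y.val < x then (1:ℕ) else 0) + (if x ≤ y.val then 1 else 0)))
      = L := by
    rw [Finset.sum_congr rfl (fun y _ => show _ = (1:ℕ) from by
      by_cases hy : y.val < x
      · rw [if_pos hy, if_neg (by omega)]
      · rw [if_neg hy, if_pos (by omega)])]
    simp
  rw [Finset.sum_add_distrib, h] at hsum
  omega

lemma cnt_le_bound (x : ℕ) (hx : x < L) (z : Fin L → Bool) : cnt x L z ≤ L - x := by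
  rw [← count_ge x hx]
  refine Finset.sum_le_sum fun y _ => ?_
  by_cases h : x ≤ y.val ∧ y.val < L ∧ z y = true
  · rw [if_pos h, if_pos h.1]
  · rw [if_neg h]
    exact Nat.zero_le _

lemma S_eq (r : Fin L → Bool) :
    (Finset.univ.filter fun y : Fin L => r y = true).card = cnt 0 L r := by
  rw [Finset.card_filter]
  refine Finset.sum_congr rfl fun y _ => ?_
  by_cases h : r y = true
  · rw [if_pos h, if_pos ⟨Nat.zero_le _, y.isLt, h⟩]
  · rw [if_neg h, if_neg (by rintro ⟨-, -, hh⟩; exact h hh)]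

lemma cnt_split_at (x : ℕ) (z : Fin L → Bool) : cnt 0 L z = cnt 0 x z + cnt x L z := by
  unfold cnt
  rw [← Finset.sum_add_distrib]
  refine Finset.sum_congr rfl fun y _ => ?_
  by_cases h : z y = true
  · by_cases h2 : y.val < x
    · rw [if_pos ⟨Nat.zero_le _, y.isLt, h⟩, if_pos ⟨Nat.zero_le _, h2, h⟩,
        if_neg (by rintro ⟨hh, -, -⟩; omega)]
    · rw [if_pos ⟨Nat.zero_le _, y.isLt, h⟩, if_neg (by rintro ⟨-, hh, -⟩; omega),
        if_pos ⟨by omega, y.isLt, h⟩]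
  · rw [if_neg (by rintro ⟨-, -, hh⟩; exact h hh), if_neg (by rintro ⟨-, -, hh⟩; exact h hh),
      if_neg (by rintro ⟨-, -, hh⟩; exact h hh)]

/-! ### the full-sweep law -/

lemma wtt : (if (true : Bool) = true then p else q) = p := rfl
lemma wff : (if (false : Bool) = true then p else q) = q := rfl

lemma prod_step {j : ℕ} (hjL : j < L) (c : Fin L → Bool) :
    (∏ x : Fin L, (if j ≤ x.val then (if c x then p else q) else 1))
      = (if c ⟨j, hjL⟩ then p else q)
        * ∏ x : Fin L, (if j + 1 ≤ x.val then (if c x then p else q) else 1) := by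
  rw [← Finset.mul_prod_erase Finset.univ
      (fun x : Fin L => if j ≤ x.val then (if c x then p else q) else 1)
      (Finset.mem_univ (⟨j, hjL⟩ : Fin L)),
    ← Finset.mul_prod_erase Finset.univ
      (fun x : Fin L => if j + 1 ≤ x.val then (if c x then p else q) else 1)
      (Finset.mem_univ (⟨j, hjL⟩ : Fin L))]
  have hhead : (if j ≤ ((⟨j, hjL⟩ : Fin L)).val then (if c ⟨j, hjL⟩ then p else q) else 1)
      = (if c ⟨j, hjL⟩ then p else q) := if_pos (le_refl j)
  have hhead2 : (if j + 1 ≤ ((⟨j, hjL⟩ : Fin L)).val then (if c ⟨j, hjL⟩ then p else q) else 1)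
      = 1 := if_neg (Nat.not_succ_le_self j)
  rw [hhead, hhead2, one_mul]
  congr 1
  refine Finset.prod_congr rfl fun x hx => ?_
  have hxj : x.val ≠ j := by
    intro h
    exact (Finset.ne_of_mem_erase hx) (Fin.ext h)
  by_cases h2 : j + 1 ≤ x.val
  · rw [if_pos h2, if_pos (by omega)]
  · rw [if_neg h2, if_neg (by omega)]

lemma psi_stop {j : ℕ} (hjL : ¬ j < L) (z : Fin L → Bool) (m : ℕ) (c : Fin L → Bool) :
    fProb p q j z m c
      = (if ∀ x : Fin L, x.val < j → c x = z x then 1 else 0)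
        * ∏ x : Fin L, (if j ≤ x.val then (if c x then p else q) else 1) := by
  rw [fProb_stop p q hjL]
  have hP : (∏ x : Fin L, (if j ≤ x.val then (if c x then p else q) else 1)) = 1 :=
    Finset.prod_eq_one fun x _ => if_neg (by have := x.isLt; omega)
  rw [hP, mul_one]
  exact if_congr
    ⟨fun h x _ => by rw [h], fun h => funext fun x => (h x (by have := x.isLt; omega)).symm⟩
    rfl rfl

lemma psi_outer (hpq : p + q = 1) :
    ∀ (d j : ℕ), L - j ≤ d → ∀ (z : Fin L → Bool) (m : ℕ) (c : Fin L → Bool),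
      (∀ x : ℕ, j ≤ x → x < L → x - j + 1 ≤ m + cnt j x z) →
      fProb p q j z m c
        = (if ∀ x : Fin L, x.val < j → c x = z x then 1 else 0)
          * ∏ x : Fin L, (if j ≤ x.val then (if c x then p else q) else 1) := by
  intro d
  induction d with
  | zero =>
    intro j hj z m c H
    exact psi_stop p q (by omega) z m c
  | succ d ihd =>
    intro j hj z m c H
    by_cases hjL : j < L
    · have hm1 : 1 ≤ m := by
        have h0 := H j le_rfl hjL
        rw [cnt_self] at h0
        omega
      obtain ⟨t, rfl⟩ : ∃ t, m = t + 1 := ⟨m - 1, by omega⟩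
      rw [fProb_succ p q hjL]
      have H1 : ∀ x : ℕ, j + 1 ≤ x → x < L →
          x - (j + 1) + 1 ≤ (t + (if z ⟨j, hjL⟩ then 1 else 0))
            + cnt (j + 1) x (Function.update z ⟨j, hjL⟩ true) := by
        intro x hx1 hx2
        have h := H x (by omega) hx2
        rw [cnt_split hjL x (by omega)] at h
        rw [cnt_update (Nat.lt_succ_self j)]
        omega
      have H2 : ∀ x : ℕ, j + 1 ≤ x → x < L →
          x - (j + 1) + 1 ≤ (t + 1 + (if z ⟨j, hjL⟩ then 1 else 0))
            + cnt (j + 1) x (Function.update z ⟨j, hjL⟩ false) := by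
        intro x hx1 hx2
        have h := H x (by omega) hx2
        rw [cnt_split hjL x (by omega)] at h
        rw [cnt_update (Nat.lt_succ_self j)]
        omega
      rw [ihd (j + 1) (by omega) _ _ c H1, ihd (j + 1) (by omega) _ _ c H2]
      rw [prod_step p q hjL c]
      by_cases hc : c ⟨j, hjL⟩ = true
      · have hindf : (if ∀ x : Fin L, x.val < j + 1 →
              c x = Function.update z ⟨j, hjL⟩ false x then (1:ℝ) else 0) = 0 := by
          rw [if_neg]
          intro h
          have hX := h ⟨j, hjL⟩ (Nat.lt_succ_self j)
          rw [Function.update_self, hc] at hX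
          exact Bool.false_ne_true hX.symm
        have hindt : (if ∀ x : Fin L, x.val < j + 1 →
              c x = Function.update z ⟨j, hjL⟩ true x then (1:ℝ) else 0)
            = (if ∀ x : Fin L, x.val < j → c x = z x then (1:ℝ) else 0) := by
          refine if_congr ⟨?_, ?_⟩ rfl rfl
          · intro h x hx
            have hxX : x ≠ (⟨j, hjL⟩ : Fin L) := by
              intro he
              rw [he] at hx
              exact absurd hx (Nat.lt_irrefl j)
            have hthis := h x (by omega)
            rwa [Function.update_of_ne hxX] at hthis
          · intro h x hx
            by_cases hxX : x = ⟨j, hjL⟩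
            · subst hxX
              rw [Function.update_self]
              exact hc
            · have hxj : x.val < j := by
                have hne : x.val ≠ j := fun hv => hxX (Fin.ext hv)
                omega
              rw [Function.update_of_ne hxX]
              exact h x hxj
        rw [hindf, hindt, hc, wtt]
        ring
      · have hcf : c ⟨j, hjL⟩ = false := by simpa using hc
        have hindt : (if ∀ x : Fin L, x.val < j + 1 →
              c x = Function.update z ⟨j, hjL⟩ true x then (1:ℝ) else 0) = 0 := by
          rw [if_neg]
          intro h
          have hX := h ⟨j, hjL⟩ (Nat.lt_succ_self j)
          rw [Function.update_self, hcf] at hX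
          exact Bool.false_ne_true hX
        have hindf : (if ∀ x : Fin L, x.val < j + 1 →
              c x = Function.update z ⟨j, hjL⟩ false x then (1:ℝ) else 0)
            = (if ∀ x : Fin L, x.val < j → c x = z x then (1:ℝ) else 0) := by
          refine if_congr ⟨?_, ?_⟩ rfl rfl
          · intro h x hx
            have hxX : x ≠ (⟨j, hjL⟩ : Fin L) := by
              intro he
              rw [he] at hx
              exact absurd hx (Nat.lt_irrefl j)
            have hthis := h x (by omega)
            rwa [Function.update_of_ne hxX] at hthis
          · intro h x hx
            by_cases hxX : x = ⟨j, hjL⟩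
            · subst hxX
              rw [Function.update_self]
              exact hcf
            · have hxj : x.val < j := by
                have hne : x.val ≠ j := fun hv => hxX (Fin.ext hv)
                omega
              rw [Function.update_of_ne hxX]
              exact h x hxj
        rw [hindt, hindf, hcf, wff]
        ring
    · exact psi_stop p q hjL z m c


/-! ### assembly -/

lemma prod_eq_psi (c : Fin L → Bool) :
    (∏ x : Fin L, (if c x then p else q)) = psi p q c := by
  rw [psi, Finset.prod_ite, Finset.prod_const, Finset.prod_const]
  have h := Finset.card_filter_add_card_filter_not
    (s := (Finset.univ : Finset (Fin L))) (p := fun x => c x = true)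
  rw [Finset.card_univ, Fintype.card_fin] at h
  have h2 : (Finset.univ.filter fun x : Fin L => ¬ c x = true).card
      = L - (Finset.univ.filter fun x : Fin L => c x = true).card := by omega
  rw [h2]

lemma wmat_pow (hpq : p + q = 1) : ∀ (k : ℕ) (r c : Fin L → Bool),
    ((Wmat p q L) ^ k) r c = fProb p q 0 r k c := by
  intro k
  induction k with
  | zero =>
    intro r c
    rw [pow_zero, fProb_zero]
    exact Matrix.one_apply
  | succ k ihk =>
    intro r c
    rw [pow_succ', Matrix.mul_apply]
    have hW : ∀ b, Wmat p q L r b = fProb p q 0 r 1 b := fun b => by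
      show Stab p q (addGrain r) b = _
      have hag : addGrain r = ⟨r, (1 : ℕ) • pileM L 0⟩ := by
        show (⟨r, pileM L 0⟩ : State L) = _
        rw [one_nsmul]
      rw [hag]
      exact frec p q hpq L 0 (by omega) r 1 b
    rw [Finset.sum_congr rfl (fun b _ => by rw [hW b, ihk b c])]
    rw [← pdgen p q hpq L 0 (by omega) r 1 k c]
    rw [Nat.add_comm]


/-- from any stable configuration `r`, after
`τ = min(L, L+1-Σ_x r(x))` driven-dissipative steps the law of the configuration is
exactly the stationary product Bernoulli(p) measure `ψ`: `W^τ δ_r = ψ`. -/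
theorem reset_to_stationary
    (L : ℕ) (hL : 0 < L) (p q : ℝ) (hp : 0 < p) (hq : 0 < q) (hpq : p + q = 1)
    (r : Fin L → Bool) :
    ∀ c : Fin L → Bool,
      ((Wmat p q L) ^
          (min L (L + 1 - (Finset.univ.filter fun x => r x = true).card))) r c
        = psi p q c := by
  intro c
  rw [wmat_pow p q hpq _ r c]
  have hypo : ∀ x : ℕ, 0 ≤ x → x < L →
      x - 0 + 1 ≤ (min L (L + 1 - (Finset.univ.filter fun x => r x = true).card))
        + cnt 0 x r := by
    intro x h0 hxL
    have hs := S_eq r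
    have hsplit := cnt_split_at (L := L) x r
    have hb := cnt_le_bound x hxL r
    rcases le_total L (L + 1 - (Finset.univ.filter fun x => r x = true).card) with hmin | hmin
    · rw [min_eq_left hmin]
      omega
    · rw [min_eq_right hmin]
      omega
  rw [psi_outer p q hpq L 0 (by omega) r _ c hypo]
  rw [if_pos (fun (x : Fin L) (hx : x.val < 0) => absurd hx (Nat.not_lt_zero _)), one_mul]
  rw [Finset.prod_congr rfl (fun x _ => if_pos (Nat.zero_le _))]
  exact prod_eq_psi p q c


end DSS
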